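/- The subgroup H₁ is not subnormal in U₁: there is no natural number n and chain of subgroups H₁ = P₀ ≤ P₁ ≤ ⋯ ≤ Pₙ = U₁ such that each Pᵢ is normal in Pᵢ₊₁ (i.e., Pᵢ.subgroupOf Pᵢ₊₁ is a normal subgroup of Pᵢ₊₁). -/
import Mathlib


/-- The symmetric group on four letters. -/
abbrev S₄ := Equiv.Perm (Fin 4)

/-- The alternating group on four letters, as a (normal) subgroup of `S₄`. -/
abbrev A₄ : Subgroup S₄ := alternatingGroup (Fin 4)

/-- `U₁ = A₄ ⋊ S₄`, the external semidirect product of `S₄` acting on `A₄` by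
conjugation. -/
abbrev U₁ := A₄ ⋊[MulAut.conjNormal] S₄

/-- The transposition `(1 2)`. -/
def τ : S₄ := Equiv.swap 0 1

/-- `H₁`, the subgroup of `U₁` generated by the image of `inl : A₄ →* U₁` together
with the element `inr τ`. -/
def H₁ : Subgroup U₁ :=
  Subgroup.closure
    (Set.range (SemidirectProduct.inl : ↥A₄ →* U₁) ∪ {SemidirectProduct.inr τ})

open SemidirectProduct Subgroup

lemma inr_τ_mem : inr τ ∈ H₁ :=
  subset_closure (Set.mem_union_right _ rfl)

lemma inl_mem (a : A₄) : (inl a : U₁) ∈ H₁ :=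
  subset_closure (Set.mem_union_left _ ⟨a, rfl⟩)

lemma H₁_ne_top : H₁ ≠ ⊤ := by
  intro h
  have hle : H₁ ≤ (MulAction.stabilizer S₄ (2 : Fin 4)).comap (rightHom : U₁ →* S₄) := by
    rw [H₁, closure_le]
    rintro x (⟨a, rfl⟩ | rfl)
    · simp [Subgroup.mem_comap, rightHom_inl]
    · simp only [Set.mem_singleton_iff, SetLike.mem_coe, Subgroup.mem_comap, rightHom_inr,
        MulAction.mem_stabilizer_iff]
      decide
  have hmem : (inr (Equiv.swap 2 3) : U₁) ∈ H₁ := h ▸ mem_top _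
  have h2 := hle hmem
  simp only [Subgroup.mem_comap, rightHom_inr, MulAction.mem_stabilizer_iff] at h2
  revert h2
  decide

lemma normal_eq_top (N : Subgroup U₁) (hN : N.Normal) (h : H₁ ≤ N) : N = ⊤ := by
  have hinr : ∀ σ : S₄, (inr σ : U₁) ∈ N := by
    have : (N.comap (inr : S₄ →* U₁)) = ⊤ := by
      rw [eq_top_iff, ← Equiv.Perm.closure_isSwap, closure_le]
      rintro s ⟨a, b, hab, rfl⟩
      obtain ⟨c, hc⟩ := isConj_iff.1 (Equiv.Perm.isConj_swap
        (show (0 : Fin 4) ≠ 1 by decide) hab)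
      have : (inr (Equiv.swap a b) : U₁) = inr c * inr τ * (inr c)⁻¹ := by
        rw [← hc, τ]; simp [mul_assoc]
      simp only [SetLike.mem_coe, Subgroup.mem_comap, this]
      exact hN.conj_mem _ (h inr_τ_mem) _
    intro σ
    have : σ ∈ N.comap (inr : S₄ →* U₁) := this ▸ mem_top _
    exact this
  rw [eq_top_iff]
  intro x _
  rw [← inl_left_mul_inr_right x]
  exact N.mul_mem (h (inl_mem _)) (hinr _)

set_option synthInstance.maxHeartbeats 1000000 in
lemma normal_of_subgroupOf_top (Q : Subgroup U₁)
    (h : (Q.subgroupOf (⊤ : Subgroup U₁)).Normal) : Q.Normal := by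
  constructor
  intro q hq g
  have := h.conj_mem ⟨q, mem_top _⟩ (by simpa [Subgroup.mem_subgroupOf] using hq)
    ⟨g, mem_top _⟩
  simpa [Subgroup.mem_subgroupOf] using this

/-- `H₁` is not subnormal in `U₁`: there is no finite chain of subgroups
`H₁ = P₀ ≤ P₁ ≤ ⋯ ≤ Pₙ = U₁` in which each term is normal in the next. -/
theorem stmt6 :
    ¬ ∃ (n : ℕ) (P : Fin (n + 1) → Subgroup U₁),
        P 0 = H₁ ∧ P (Fin.last n) = ⊤ ∧
        ∀ i : Fin n,
          P i.castSucc ≤ P i.succ ∧ ((P i.castSucc).subgroupOf (P i.succ)).Normal := by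
  rintro ⟨n, P, h0, hlast, hstep⟩
  have hH : ∀ i : Fin (n + 1), H₁ ≤ P i := by
    intro i
    induction i using Fin.induction with
    | zero => rw [h0]
    | succ j ih => exact le_trans ih (hstep j).1
  have key : ∀ j : ℕ, (hj : j ≤ n) → P ⟨n - j, by omega⟩ = ⊤ := by
    intro j
    induction j with
    | zero =>
      intro _
      have : (⟨n - 0, by omega⟩ : Fin (n + 1)) = Fin.last n := by
        ext; simp
      rw [this]; exact hlast
    | succ k ih =>
      intro hk
      have hkn := ih (by omega)
      set i : Fin n := ⟨n - (k + 1), by omega⟩ with hi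
      have hsucc : i.succ = (⟨n - k, by omega⟩ : Fin (n + 1)) := by
        ext; simp [hi]; omega
      have hs := hstep i
      rw [hsucc, hkn] at hs
      have hcast : i.castSucc = (⟨n - (k + 1), by omega⟩ : Fin (n + 1)) := rfl
      rw [hcast] at hs
      exact normal_eq_top _ (normal_of_subgroupOf_top _ hs.2) (hH _)
  have hzero := key n le_rfl
  have : (⟨n - n, by omega⟩ : Fin (n + 1)) = 0 := by ext; simp
  rw [this, h0] at hzero
  exact H₁_ne_top hzero
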